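/- Let n be a natural number and let a firewall f be a list of rules, where rule ℓ is given by (v_ℓ, W_ℓ) with v_ℓ : Fin n → Bool and W_ℓ ⊆ Fin n. For each ℓ let ι_ℓ be a type and σ_ℓ : Fin n → Bool → ι_ℓ a function such that σ_ℓ i b = σ_ℓ j b' implies i = j, and σ_ℓ i false = σ_ℓ i true holds if and only if i ∈ W_ℓ. Then for every packet p : Fin n → Bool, the first index ℓ (if any) at which the obfuscated test succeeds, i.e., at which ∏_{i : Fin n} X_{σ_ℓ i (p i)} = ∏_{i : Fin n} X_{σ_ℓ i (v_ℓ i)} holds in MvPolynomial ι_ℓ ℤ, equals the first index ℓ (if any) at which p matches the plain rule (v_ℓ, W_ℓ), i.e., p i = v_ℓ i for all i ∉ W_ℓ; in particular one index exists if and only if the other does. -/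

import Mathlib

open MvPolynomial

lemma prod_X_eq_monomial {ι : Type*} {n : ℕ} (a : Fin n → ι) :
    (∏ i : Fin n, (X (a i) : MvPolynomial ι ℤ)) =
      monomial (∑ i : Fin n, Finsupp.single (a i) 1) 1 := by
  classical
  induction (Finset.univ : Finset (Fin n)) using Finset.induction with
  | empty => simp
  | insert _ _ h ih =>
    rw [Finset.prod_insert h, Finset.sum_insert h, ih, X, monomial_mul, one_mul]

lemma prod_X_eq_iff {ι : Type*} {n : ℕ} (a b : Fin n → ι)
    (h : ∀ i j, a i = b j → i = j) (ha : ∀ i j, a i = a j → i = j) :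
    ((∏ i : Fin n, (X (a i) : MvPolynomial ι ℤ)) = ∏ i : Fin n, X (b i)) ↔
      ∀ i, a i = b i := by
  classical
  constructor
  · intro hp i₀
    rw [prod_X_eq_monomial, prod_X_eq_monomial] at hp
    have hs := monomial_left_injective (one_ne_zero (α := ℤ)) hp
    have hval := DFunLike.congr_fun hs (a i₀)
    rw [Finsupp.finset_sum_apply, Finsupp.finset_sum_apply] at hval
    have h1 : (∑ i : Fin n, (Finsupp.single (a i) 1) (a i₀)) = 1 := by
      rw [Finset.sum_eq_single i₀]
      · simp
      · intro j _ hj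
        rw [Finsupp.single_apply, if_neg]
        intro hc
        exact hj (ha j i₀ hc)
      · simp
    rw [h1] at hval
    by_contra hne
    have : (∑ i : Fin n, (Finsupp.single (b i) 1) (a i₀)) = 0 := by
      apply Finset.sum_eq_zero
      intro j _
      rw [Finsupp.single_apply, if_neg]
      intro hc
      rcases (h i₀ j hc.symm) with rfl
      exact hne hc.symm
    rw [this] at hval
    exact one_ne_zero hval
  · intro h'
    exact Finset.prod_congr rfl fun i _ => by rw [h' i]

/-- End-to-end functional correctness of the obfuscated firewall: for every
packet, the first rule index at which the obfuscated zero test succeeds is the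
first index at which the packet matches the plain rule; in particular one such
index exists iff the other does. -/
theorem obfuscated_firewall_correct (n : ℕ)
    (f : List ((Fin n → Bool) × Set (Fin n)))
    (ι : Fin f.length → Type*)
    (σ : (ℓ : Fin f.length) → Fin n → Bool → ι ℓ)
    (hinj : ∀ (ℓ : Fin f.length) (i j : Fin n) (b b' : Bool),
      σ ℓ i b = σ ℓ j b' → i = j)
    (hW : ∀ (ℓ : Fin f.length) (i : Fin n),
      σ ℓ i false = σ ℓ i true ↔ i ∈ (f.get ℓ).2)
    (p : Fin n → Bool) :
    (∀ ℓ : Fin f.length,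
      (((∏ i : Fin n, (X (σ ℓ i (p i)) : MvPolynomial (ι ℓ) ℤ)) =
            ∏ i : Fin n, X (σ ℓ i ((f.get ℓ).1 i))) ∧
        ∀ m : Fin f.length, m < ℓ →
          ¬ ((∏ i : Fin n, (X (σ m i (p i)) : MvPolynomial (ι m) ℤ)) =
              ∏ i : Fin n, X (σ m i ((f.get m).1 i)))) ↔
      ((∀ i : Fin n, i ∉ (f.get ℓ).2 → p i = (f.get ℓ).1 i) ∧
        ∀ m : Fin f.length, m < ℓ →
          ¬ (∀ i : Fin n, i ∉ (f.get m).2 → p i = (f.get m).1 i))) ∧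
    ((∃ ℓ : Fin f.length,
        (∏ i : Fin n, (X (σ ℓ i (p i)) : MvPolynomial (ι ℓ) ℤ)) =
          ∏ i : Fin n, X (σ ℓ i ((f.get ℓ).1 i))) ↔
      (∃ ℓ : Fin f.length,
        ∀ i : Fin n, i ∉ (f.get ℓ).2 → p i = (f.get ℓ).1 i)) := by
  have key : ∀ ℓ : Fin f.length,
      ((∏ i : Fin n, (X (σ ℓ i (p i)) : MvPolynomial (ι ℓ) ℤ)) =
        ∏ i : Fin n, X (σ ℓ i ((f.get ℓ).1 i))) ↔
      (∀ i : Fin n, i ∉ (f.get ℓ).2 → p i = (f.get ℓ).1 i) := by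
    intro ℓ
    rw [prod_X_eq_iff _ _ (fun i j => hinj ℓ i j _ _) (fun i j => hinj ℓ i j _ _)]
    constructor
    · intro h i hi
      have hσ := h i
      by_contra hne
      apply hi
      rw [← hW ℓ i]
      cases hp : p i <;> cases hv : (f.get ℓ).1 i <;> rw [hp, hv] at hσ hne
      · exact absurd rfl hne
      · exact hσ
      · exact hσ.symm
      · exact absurd rfl hne
    · intro h i
      by_cases hi : i ∈ (f.get ℓ).2
      · have hff := (hW ℓ i).mpr hi
        cases hp : p i <;> cases hv : (f.get ℓ).1 i
        · rfl
        · exact hff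
        · exact hff.symm
        · rfl
      · rw [h i hi]
  refine ⟨fun ℓ => ?_, ?_⟩
  · rw [key ℓ]
    constructor
    · rintro ⟨h1, h2⟩
      exact ⟨h1, fun m hm => (key m).not.mp (h2 m hm)⟩
    · rintro ⟨h1, h2⟩
      exact ⟨h1, fun m hm => (key m).not.mpr (h2 m hm)⟩
  · exact exists_congr key
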